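/- arXiv:1002.3539 — 4 statements merged into one kernel-verified Lean document; each statement's English description precedes it below -/
import Mathlib

section
/- The function f_1(u,t) = 1 for u ≤ -βt/(1-β), f_1(u,t) = (1/β)(1 - sqrt(t(1-β)/(t-u))) for -βt/(1-β) ≤ u ≤ βt, and f_1(u,t) = 0 for u ≥ βt, satisfies the conservation-law PDE ∂f/∂t + ∂/∂u [ β f(1-f)/(1-βf) ] = 0 at all points (u,t) with t > 0 and -βt/(1-β) < u < βt. -/
noncomputable def f1profile (β : ℝ) : ℝ → ℝ → ℝ := fun u t =>
  if u ≤ -(β * t) / (1 - β) then 1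
  else if β * t ≤ u then 0
  else (1 / β) * (1 - Real.sqrt (t * (1 - β) / (t - u)))

theorem stmt0 (β : ℝ) (hβ : β ∈ Set.Ioo (0:ℝ) 1) (u t : ℝ) (ht : 0 < t)
    (h1 : -(β * t) / (1 - β) < u) (h2 : u < β * t) :
    deriv (fun s => f1profile β u s) t
      + deriv (fun v => β * f1profile β v t * (1 - f1profile β v t)
          / (1 - β * f1profile β v t)) u = 0 := by
  obtain ⟨hβ0, hβ1⟩ := hβ
  have hc : (0:ℝ) < 1 - β := by linarith
  have hD : 0 < t - u := by nlinarith
  have hpos : 0 < t * (1 - β) / (t - u) := by positivity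
  have hs : 0 < Real.sqrt (t * (1 - β) / (t - u)) := Real.sqrt_pos.mpr hpos
  have hs2 : Real.sqrt (t * (1 - β) / (t - u)) ^ 2 = t * (1 - β) / (t - u) :=
    Real.sq_sqrt hpos.le
  set s := Real.sqrt (t * (1 - β) / (t - u)) with hs_def
  -- time derivative
  have e1 : ∀ᶠ τ in nhds t, -(β * τ) / (1 - β) < u :=
    ((continuous_const.mul continuous_id).neg.div_const _).continuousAt.eventually_lt
      continuousAt_const h1
  have e2 : ∀ᶠ τ in nhds t, u < β * τ :=
    continuousAt_const.eventually_lt (continuous_const.mul continuous_id).continuousAt h2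
  have heqt : (fun τ => f1profile β u τ) =ᶠ[nhds t]
      (fun τ => (1 / β) * (1 - Real.sqrt (τ * (1 - β) / (τ - u)))) := by
    filter_upwards [e1, e2] with τ ha hb
    simp only [f1profile, if_neg (not_le.mpr ha), if_neg (not_le.mpr hb)]
  have hr : HasDerivAt (fun τ : ℝ => τ * (1 - β) / (τ - u))
      ((-(u * (1 - β))) / (t - u) ^ 2) t := by
    have ha : HasDerivAt (fun τ : ℝ => τ * (1 - β)) (1 - β) t := by
      simpa using (hasDerivAt_id t).mul_const (1 - β)
    have hb : HasDerivAt (fun τ : ℝ => τ - u) 1 t := (hasDerivAt_id t).sub_const u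
    have := (ha.div hb hD.ne' : HasDerivAt (fun τ : ℝ => τ * (1 - β) / (τ - u)) _ t)
    exact this.congr_deriv (by ring)
  have hsqt : HasDerivAt (fun τ => Real.sqrt (τ * (1 - β) / (τ - u)))
      (1 / (2 * s) * ((-(u * (1 - β))) / (t - u) ^ 2)) t :=
    (Real.hasDerivAt_sqrt (x := t * (1 - β) / (t - u)) hpos.ne').comp t hr
  have hF : HasDerivAt (fun τ => (1 / β) * (1 - Real.sqrt (τ * (1 - β) / (τ - u))))
      ((1 / β) * (-(1 / (2 * s) * ((-(u * (1 - β))) / (t - u) ^ 2)))) t :=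
    (hsqt.const_sub 1).const_mul (1 / β)
  have dt_eq : deriv (fun τ => f1profile β u τ) t
      = (1 / β) * (-(1 / (2 * s) * ((-(u * (1 - β))) / (t - u) ^ 2))) := by
    rw [heqt.deriv_eq]; exact hF.deriv
  -- space derivative
  have e3 : ∀ᶠ v in nhds u, -(β * t) / (1 - β) < v :=
    continuousAt_const.eventually_lt continuousAt_id h1
  have e4 : ∀ᶠ v in nhds u, v < β * t :=
    continuousAt_id.eventually_lt continuousAt_const h2
  have heqx : (fun v => β * f1profile β v t * (1 - f1profile β v t)
        / (1 - β * f1profile β v t)) =ᶠ[nhds u]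
      (fun v => β * ((1 / β) * (1 - Real.sqrt (t * (1 - β) / (t - v))))
        * (1 - (1 / β) * (1 - Real.sqrt (t * (1 - β) / (t - v))))
        / (1 - β * ((1 / β) * (1 - Real.sqrt (t * (1 - β) / (t - v)))))) := by
    filter_upwards [e3, e4] with v ha hb
    simp only [f1profile, if_neg (not_le.mpr ha), if_neg (not_le.mpr hb)]
  have hr2 : HasDerivAt (fun v : ℝ => t * (1 - β) / (t - v))
      ((t * (1 - β)) / (t - u) ^ 2) u := by
    have ha : HasDerivAt (fun _ : ℝ => t * (1 - β)) 0 u := hasDerivAt_const u _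
    have hb : HasDerivAt (fun v : ℝ => t - v) (-1) u := (hasDerivAt_id u).const_sub t
    have := (ha.div hb hD.ne' : HasDerivAt (fun v : ℝ => t * (1 - β) / (t - v)) _ u)
    exact this.congr_deriv (by ring)
  have hsqx : HasDerivAt (fun v => Real.sqrt (t * (1 - β) / (t - v)))
      (1 / (2 * s) * ((t * (1 - β)) / (t - u) ^ 2)) u :=
    (Real.hasDerivAt_sqrt (x := t * (1 - β) / (t - u)) hpos.ne').comp u hr2
  set σ' : ℝ := 1 / (2 * s) * ((t * (1 - β)) / (t - u) ^ 2) with hσ'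
  have hg : HasDerivAt (fun v => (1 / β) * (1 - Real.sqrt (t * (1 - β) / (t - v))))
      ((1 / β) * (-σ')) u := (hsqx.const_sub 1).const_mul (1 / β)
  have hnum := (hg.const_mul β).mul (hg.const_sub 1)
  have hdenD := (hg.const_mul β).const_sub 1
  have hne : (1:ℝ) - β * ((1 / β) * (1 - Real.sqrt (t * (1 - β) / (t - u)))) ≠ 0 := by
    rw [← hs_def]
    have : (1:ℝ) - β * ((1 / β) * (1 - s)) = s := by field_simp; ring
    rw [this]; exact hs.ne'
  have hH := hnum.div hdenD hne
  rw [← hs_def] at hH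
  have dx_eq := heqx.deriv_eq.trans hH.deriv
  rw [dt_eq, dx_eq]
  have hβne : β ≠ 0 := hβ0.ne'
  have hDne : t - u ≠ 0 := hD.ne'
  have hsne : s ≠ 0 := hs.ne'
  have key : s ^ 2 * (t - u) = t * (1 - β) := by
    rw [hs2]; field_simp
  have E1 : (1:ℝ) - β * (1 / β * (1 - s)) = s := by field_simp; ring
  have E2 : β * (1 / β * -σ') * (1 - 1 / β * (1 - s)) + β * (1 / β * (1 - s)) * -(1 / β * -σ')
      = σ' * (2 - β - 2 * s) / β := by
    rw [eq_div_iff hβne]; field_simp <;> (try left) <;> (first | trivial | ring)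
  have E3 : β * (1 / β * (1 - s)) * (1 - 1 / β * (1 - s)) = (1 - s) * (β - 1 + s) / β := by
    rw [eq_div_iff hβne]; field_simp <;> (try left) <;> (first | trivial | ring)
  have E4 : -(β * (1 / β * -σ')) = σ' := by field_simp
  simp only [Pi.mul_apply]; rw [← hs_def]
  rw [E1, E2, E3, E4, hσ']
  field_simp
  linear_combination (-(1 - β)) * key
end

section
/- Let β ∈ (0,1), g_1(u) = 1 - f_1(u) where f_1(u) = (1/β)(1 - sqrt((1-β)/(1-u))) on [-β/(1-β), β]. Define s_1(x,y) = g_1'(x)g_1'(y) for x > y, and s_1(x,y) = ((1-β)/(2β³))(1-x)^{-3/2}(1-y)^{-3/2}(sqrt((1-β)/(1-y)) - sqrt((1-β)/(1-x))) for x ≤ y, and r_1(x) = sqrt(1-β)(1-g_1(x))g_1(x)/(2β(1-x)^{3/2}), all on [-β/(1-β), β]². Then ∬_{x>y} s_1 dx dy = 1/2, ∫ r_1(x) dx = 1/6, and ∬_{x<y} s_1 dx dy = 1/3; in particular the total mass is 1. -/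
open Real Set MeasureTheory intervalIntegral

noncomputable def g1speed (β : ℝ) : ℝ → ℝ := fun u =>
  1 - (1/β) * (1 - Real.sqrt ((1-β)/(1-u)))

noncomputable def s1dens (β : ℝ) : ℝ → ℝ → ℝ := fun x y =>
  if y < x then ((1-β)/(4*β^2)) * (1-x) ^ (-(3/2) : ℝ) * (1-y) ^ (-(3/2) : ℝ)
  else ((1-β)/(2*β^3)) * (1-x) ^ (-(3/2) : ℝ) * (1-y) ^ (-(3/2) : ℝ)
        * (Real.sqrt ((1-β)/(1-y)) - Real.sqrt ((1-β)/(1-x)))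

noncomputable def r1dens (β : ℝ) : ℝ → ℝ := fun x =>
  Real.sqrt (1-β) * (1 - g1speed β x) * g1speed β x / (2*β*(1-x) ^ ((3/2) : ℝ))

lemma hasDerivAt_one_sub_rpow (p : ℝ) {y : ℝ} (h : 0 < 1 - y) :
    HasDerivAt (fun z : ℝ => (1 - z) ^ p) (-(p * (1 - y) ^ (p - 1))) y := by
  have h1 : HasDerivAt (fun z : ℝ => 1 - z) (-1) y := by
    simpa using (hasDerivAt_id y).const_sub 1
  have := (Real.hasDerivAt_rpow_const (x := 1 - y) (p := p) (Or.inl h.ne')).comp y h1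
  have h3 : HasDerivAt (fun z : ℝ => (1 - z) ^ p) (p * (1 - y) ^ (p - 1) * -1) y := this
  convert h3 using 1; ring

lemma continuousOn_one_sub_rpow (p : ℝ) {s : Set ℝ} (hs : ∀ y ∈ s, y < 1) :
    ContinuousOn (fun z : ℝ => (1 - z) ^ p) s := by
  apply ContinuousOn.rpow_const (by fun_prop)
  intro y hy
  exact Or.inl (by have := hs y hy; intro h; linarith [sub_eq_zero.mp h])

lemma integral_one_sub_rpow {p a b : ℝ} (hp : p + 1 ≠ 0) (ha : a < 1) (hb : b < 1) :
    ∫ y in a..b, (1 - y) ^ p = ((1 - a) ^ (p + 1) - (1 - b) ^ (p + 1)) / (p + 1) := by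
  have hmem : ∀ y ∈ Set.uIcc a b, 0 < 1 - y := by
    intro y hy
    have h2 : y ≤ max a b := hy.2
    have : y < 1 := lt_of_le_of_lt h2 (max_lt ha hb)
    linarith
  have hF : ∀ y ∈ Set.uIcc a b, HasDerivAt
      (fun z : ℝ => -((1 - z) ^ (p + 1)) / (p + 1)) ((1 - y) ^ p) y := by
    intro y hy
    have := ((hasDerivAt_one_sub_rpow (p + 1) (hmem y hy)).neg).div_const (p + 1)
    simpa [hp, add_sub_cancel_right] using this
  have hint : IntervalIntegrable (fun z : ℝ => (1 - z) ^ p) volume a b :=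
    (continuousOn_one_sub_rpow p (fun y hy => by have := hmem y hy; linarith)).intervalIntegrable
  rw [intervalIntegral.integral_eq_sub_of_hasDerivAt hF hint]
  ring

lemma rpow_neg_half_pow {a : ℝ} (ha : 0 < a) (n : ℕ) :
    a ^ (-((n : ℝ) / 2)) = (Real.sqrt a ^ n)⁻¹ := by
  rw [← Real.rpow_natCast (Real.sqrt a) n, Real.sqrt_eq_rpow, ← Real.rpow_mul ha.le,
    ← Real.rpow_neg ha.le]
  ring_nf

lemma rpow_half_pow {a : ℝ} (ha : 0 ≤ a) (n : ℕ) :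
    a ^ ((n : ℝ) / 2) = Real.sqrt a ^ n := by
  rw [← Real.rpow_natCast (Real.sqrt a) n, Real.sqrt_eq_rpow, ← Real.rpow_mul ha]
  ring_nf

set_option maxHeartbeats 2000000 in
theorem stmt9 (β : ℝ) (hβ : β ∈ Set.Ioo (0:ℝ) 1) :
    (∫ x in Icc (-β/(1-β)) β, ∫ y in Icc (-β/(1-β)) β,
        (if y < x then s1dens β x y else 0)) = 1/2 ∧
    (∫ x in Icc (-β/(1-β)) β, r1dens β x) = 1/6 ∧
    (∫ x in Icc (-β/(1-β)) β, ∫ y in Icc (-β/(1-β)) β,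
        (if x < y then s1dens β x y else 0)) = 1/3 := by
  obtain ⟨hβ0, hβ1⟩ := hβ
  set L : ℝ := -β/(1-β) with hLdef
  have h1β : 0 < 1 - β := by linarith
  have hLneg : L < 0 := by
    have : 0 < β / (1-β) := div_pos hβ0 h1β
    rw [hLdef, neg_div]; linarith
  have hLβ : L ≤ β := le_of_lt (lt_trans hLneg hβ0)
  have hL1 : L < 1 := lt_trans hLneg one_pos
  have h1L : 1 - L = (1-β)⁻¹ := by
    rw [hLdef]; field_simp; ring
  set c : ℝ := Real.sqrt (1-β) with hcdef
  have hc : 0 < c := Real.sqrt_pos.mpr h1β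
  have hc2 : c^2 = 1 - β := Real.sq_sqrt h1β.le
  have hsqL : Real.sqrt (1 - L) = c⁻¹ := by
    rw [h1L, Real.sqrt_inv]
  -- generic positivity of 1 - x on [L, β]
  have hpos : ∀ x ∈ Icc L β, 0 < 1 - x := fun x hx => by
    have := hx.2; linarith
  -- Part 1
  have inner1 : ∀ x ∈ Icc L β, (∫ y in Icc L β, if y < x then s1dens β x y else 0)
      = ((1-β)/(2*β^2)) * ((1-x)^(-2:ℝ) - c * (1-x)^(-(3/2):ℝ)) := by
    intro x hx
    have hx1 : 0 < 1 - x := hpos x hx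
    have e1 : (fun y => if y < x then s1dens β x y else 0)
        = Set.indicator (Iio x) (fun y => s1dens β x y) := by
      funext y; simp [Set.indicator_apply, Set.mem_Iio]
    rw [e1, setIntegral_indicator measurableSet_Iio]
    have e2 : Icc L β ∩ Iio x = Ico L x := by
      ext y
      simp only [mem_inter_iff, mem_Icc, mem_Iio, mem_Ico]
      constructor
      · rintro ⟨⟨a1, _⟩, a2⟩; exact ⟨a1, a2⟩
      · rintro ⟨a1, a2⟩; exact ⟨⟨a1, le_trans a2.le hx.2⟩, a2⟩
    rw [e2]
    have e3 : ∫ y in Ico L x, s1dens β x y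
        = ∫ y in Ico L x, ((1-β)/(4*β^2)) * (1-x)^(-(3/2):ℝ) * (1-y)^(-(3/2):ℝ) := by
      apply setIntegral_congr_fun measurableSet_Ico
      intro y hy
      simp [s1dens, hy.2]
    rw [e3, integral_Ico_eq_integral_Ioo, ← integral_Ioc_eq_integral_Ioo, ← intervalIntegral.integral_of_le hx.1,
      intervalIntegral.integral_const_mul,
      integral_one_sub_rpow (by norm_num) hL1 (lt_of_le_of_lt hx.2 hβ1)]
    -- now pure algebra
    have h32 : (-(3/2) : ℝ) + 1 = -(1/2 : ℝ) := by norm_num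
    rw [h32]
    have h1Lpos : (0:ℝ) < 1 - L := by rw [h1L]; positivity
    have eL : (1 - L) ^ (-(1/2) : ℝ) = c := by
      have := rpow_neg_half_pow h1Lpos 1
      norm_num at this
      rw [this, hsqL]; simp
    rw [eL]
    set s : ℝ := Real.sqrt (1-x) with hsdef
    have hs : 0 < s := Real.sqrt_pos.mpr hx1
    have hs2 : s^2 = 1 - x := Real.sq_sqrt hx1.le
    have ex3 : (1-x) ^ (-(3/2) : ℝ) = (s^3)⁻¹ := by
      have := rpow_neg_half_pow hx1 3; norm_num at this; exact this
    have ex1 : (1-x) ^ (-(1/2) : ℝ) = (s)⁻¹ := by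
      have := rpow_neg_half_pow hx1 1; norm_num at this; exact this
    have ex4 : (1-x) ^ (-2 : ℝ) = (s^4)⁻¹ := by
      have := rpow_neg_half_pow hx1 4; rw [show ((4:ℕ):ℝ)/2 = 2 by norm_num] at this; exact this
    rw [ex3, ex1, ex4]
    field_simp
    ring
  -- interval integrability and standard integrals over [L, β]
  have huIcc : ∀ y ∈ Set.uIcc L β, y < 1 := by
    intro y hy
    rw [Set.uIcc_of_le hLβ] at hy
    linarith [hy.2]
  have hii : ∀ p : ℝ, IntervalIntegrable (fun x => (1-x) ^ (p:ℝ)) volume L β := fun p =>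
    (continuousOn_one_sub_rpow p huIcc).intervalIntegrable
  have eβ2 : (1-β) ^ (-2 : ℝ) = (c^4)⁻¹ := by
    have := rpow_neg_half_pow h1β 4; rw [show ((4:ℕ):ℝ)/2 = 2 by norm_num] at this; rw [this, hcdef]
  have eβ32 : (1-β) ^ (-(3/2) : ℝ) = (c^3)⁻¹ := by
    have := rpow_neg_half_pow h1β 3; norm_num at this; rw [this, hcdef]
  have eβ1 : (1-β) ^ (-1 : ℝ) = (c^2)⁻¹ := by
    have := rpow_neg_half_pow h1β 2; norm_num at this; rw [this, hcdef]
  have eβ12 : (1-β) ^ (-(1/2) : ℝ) = c⁻¹ := by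
    have := rpow_neg_half_pow h1β 1; norm_num at this; rw [this, hcdef]
  have h1Lpos : (0:ℝ) < 1 - L := by rw [h1L]; positivity
  have eL1 : (1-L) ^ (-1 : ℝ) = c^2 := by
    have := rpow_neg_half_pow h1Lpos 2; norm_num at this; rw [this, hsqL]; simp
  have eL12 : (1-L) ^ (-(1/2) : ℝ) = c := by
    have := rpow_neg_half_pow h1Lpos 1; norm_num at this; rw [this, hsqL]; simp
  have eL32 : (1-L) ^ (-(3/2) : ℝ) = c^3 := by
    have := rpow_neg_half_pow h1Lpos 3; norm_num at this; rw [this, hsqL]; simp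
  have I2 : ∫ x in L..β, (1-x) ^ (-2:ℝ) = (c^2)⁻¹ - c^2 := by
    rw [integral_one_sub_rpow (by norm_num) hL1 hβ1]
    norm_num [eβ1, eL1]
    ring
  have I32 : ∫ x in L..β, (1-x) ^ (-(3/2):ℝ) = 2*c⁻¹ - 2*c := by
    rw [integral_one_sub_rpow (by norm_num) hL1 hβ1]
    norm_num [eβ12, eL12]
    ring
  have I52 : ∫ x in L..β, (1-x) ^ (-(5/2):ℝ) = (2/3)*(c^3)⁻¹ - (2/3)*c^3 := by
    rw [integral_one_sub_rpow (by norm_num) hL1 hβ1]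
    norm_num [eβ32, eL32]
    ring
  have hβc : β = 1 - c^2 := by linarith [hc2]
  have h1c2 : (1:ℝ) - c^2 ≠ 0 := by rw [← hβc]; exact hβ0.ne'
  refine ⟨?_, ?_, ?_⟩
  · rw [setIntegral_congr_fun measurableSet_Icc inner1, integral_Icc_eq_integral_Ioc,
      ← intervalIntegral.integral_of_le hLβ, intervalIntegral.integral_const_mul,
      intervalIntegral.integral_sub (hii (-2)) ((hii (-(3/2))).const_mul c),
      intervalIntegral.integral_const_mul, I2, I32]
    rw [hβc]
    field_simp
    ring
  · -- part 2
    have eq2 : ∀ x ∈ Icc L β, r1dens β x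
        = ((2-β)*c^2/(2*β^3)) * (1-x)^(-2:ℝ) - (c^3/(2*β^3)) * (1-x)^(-(3/2):ℝ)
          - (c^3/(2*β^3)) * (1-x)^(-(5/2):ℝ) := by
      intro x hx
      have hx1 : 0 < 1 - x := hpos x hx
      set s : ℝ := Real.sqrt (1-x) with hsdef
      have hs : 0 < s := Real.sqrt_pos.mpr hx1
      have hsq : Real.sqrt ((1-β)/(1-x)) = c / s := by
        rw [Real.sqrt_div h1β.le, hsdef, hcdef]
      have ep3 : (1-x) ^ ((3/2) : ℝ) = s^3 := by
        have := rpow_half_pow hx1.le 3; norm_num at this; rw [this]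
      have ex3 : (1-x) ^ (-(3/2) : ℝ) = (s^3)⁻¹ := by
        have := rpow_neg_half_pow hx1 3; norm_num at this; exact this
      have ex4 : (1-x) ^ (-2 : ℝ) = (s^4)⁻¹ := by
        have := rpow_neg_half_pow hx1 4; rw [show ((4:ℕ):ℝ)/2 = 2 by norm_num] at this; exact this
      have ex5 : (1-x) ^ (-(5/2) : ℝ) = (s^5)⁻¹ := by
        have := rpow_neg_half_pow hx1 5; norm_num at this; exact this
      unfold r1dens g1speed
      rw [hsq, ep3, ex3, ex4, ex5, hβc]
      simp only [sub_sub_cancel, Real.sqrt_sq hc.le]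
      field_simp
      ring
    rw [setIntegral_congr_fun measurableSet_Icc eq2, integral_Icc_eq_integral_Ioc,
      ← intervalIntegral.integral_of_le hLβ,
      intervalIntegral.integral_sub (((hii (-2)).const_mul _).sub
        ((hii (-(3/2))).const_mul _)) ((hii (-(5/2))).const_mul _),
      intervalIntegral.integral_sub ((hii (-2)).const_mul _) ((hii (-(3/2))).const_mul _),
      intervalIntegral.integral_const_mul, intervalIntegral.integral_const_mul,
      intervalIntegral.integral_const_mul, I2, I32, I52]
    rw [hβc]
    field_simp
    ring
  · -- part 3
    have inner3 : ∀ x ∈ Icc L β, (∫ y in Icc L β, if x < y then s1dens β x y else 0)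
        = ((1-β)/(2*β^3)) * c * ((c^2)⁻¹*(1-x)^(-(3/2):ℝ) - 2*c⁻¹*(1-x)^(-2:ℝ)
            + (1-x)^(-(5/2):ℝ)) := by
      intro x hx
      have hx1 : 0 < 1 - x := hpos x hx
      have hxβ1 : x < 1 := by linarith
      set s : ℝ := Real.sqrt (1-x) with hsdef
      have hs : 0 < s := Real.sqrt_pos.mpr hx1
      have hs2 : s^2 = 1 - x := Real.sq_sqrt hx1.le
      have hsqx : Real.sqrt ((1-β)/(1-x)) = c / s := by
        rw [Real.sqrt_div h1β.le, hsdef, hcdef]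
      have ex3 : (1-x) ^ (-(3/2) : ℝ) = (s^3)⁻¹ := by
        have := rpow_neg_half_pow hx1 3; norm_num at this; exact this
      have ex4 : (1-x) ^ (-2 : ℝ) = (s^4)⁻¹ := by
        have := rpow_neg_half_pow hx1 4; rw [show ((4:ℕ):ℝ)/2 = 2 by norm_num] at this; exact this
      have ex5 : (1-x) ^ (-(5/2) : ℝ) = (s^5)⁻¹ := by
        have := rpow_neg_half_pow hx1 5; norm_num at this; exact this
      have ex2 : (1-x) ^ (-1 : ℝ) = (s^2)⁻¹ := by
        have := rpow_neg_half_pow hx1 2; norm_num at this; exact this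
      have ex1 : (1-x) ^ (-(1/2) : ℝ) = s⁻¹ := by
        have := rpow_neg_half_pow hx1 1; norm_num at this; exact this
      have e1 : (fun y => if x < y then s1dens β x y else 0)
          = Set.indicator (Ioi x) (fun y => s1dens β x y) := by
        funext y; simp [Set.indicator_apply, Set.mem_Ioi]
      rw [e1, setIntegral_indicator measurableSet_Ioi]
      have e2 : Icc L β ∩ Ioi x = Ioc x β := by
        ext y
        simp only [mem_inter_iff, mem_Icc, mem_Ioi, mem_Ioc]
        constructor
        · rintro ⟨⟨_, a2⟩, a3⟩; exact ⟨a3, a2⟩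
        · rintro ⟨a1, a2⟩; exact ⟨⟨le_trans hx.1 a1.le, a2⟩, a1⟩
      rw [e2]
      have e3 : ∫ y in Ioc x β, s1dens β x y
          = ∫ y in Ioc x β, ((((1-β)/(2*β^3)) * (s^3)⁻¹ * c) * (1-y)^(-2:ℝ)
              - (((1-β)/(2*β^3)) * (s^3)⁻¹ * c * s⁻¹) * (1-y)^(-(3/2):ℝ)) := by
        apply setIntegral_congr_fun measurableSet_Ioc
        intro y hy
        have hy1 : 0 < 1 - y := by have := hy.2; linarith
        have hyβ1 : y < 1 := by linarith
        set t : ℝ := Real.sqrt (1-y) with htdef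
        have ht : 0 < t := Real.sqrt_pos.mpr hy1
        have hsqy : Real.sqrt ((1-β)/(1-y)) = c / t := by
          rw [Real.sqrt_div h1β.le, htdef, hcdef]
        have ey3 : (1-y) ^ (-(3/2) : ℝ) = (t^3)⁻¹ := by
          have := rpow_neg_half_pow hy1 3; norm_num at this; exact this
        have ey4 : (1-y) ^ (-2 : ℝ) = (t^4)⁻¹ := by
          have := rpow_neg_half_pow hy1 4; rw [show ((4:ℕ):ℝ)/2 = 2 by norm_num] at this; exact this
        have hne : ¬ (y < x) := not_lt.mpr hy.1.le
        simp only [s1dens, if_neg hne]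
        rw [hsqy, hsqx, ey3, ey4, ex3]
        field_simp
      rw [e3, ← intervalIntegral.integral_of_le hx.2]
      have hii2 : ∀ p : ℝ, IntervalIntegrable (fun y => (1-y) ^ (p:ℝ)) volume x β := fun p =>
        (continuousOn_one_sub_rpow p (by
          intro y hy
          rw [Set.uIcc_of_le hx.2] at hy
          linarith [hy.2])).intervalIntegrable
      rw [intervalIntegral.integral_sub ((hii2 (-2)).const_mul _) ((hii2 (-(3/2))).const_mul _),
        intervalIntegral.integral_const_mul, intervalIntegral.integral_const_mul,
        integral_one_sub_rpow (by norm_num) hxβ1 hβ1,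
        integral_one_sub_rpow (by norm_num) hxβ1 hβ1]
      norm_num [eβ1, eβ12, ex2, ex1, ex5, ex4, ex3]
      field_simp
      ring
    rw [setIntegral_congr_fun measurableSet_Icc inner3, integral_Icc_eq_integral_Ioc,
      ← intervalIntegral.integral_of_le hLβ, intervalIntegral.integral_const_mul,
      intervalIntegral.integral_add
        (((hii (-(3/2))).const_mul _).sub ((hii (-2)).const_mul _)) (hii (-(5/2))),
      intervalIntegral.integral_sub ((hii (-(3/2))).const_mul _) ((hii (-2)).const_mul _),
      intervalIntegral.integral_const_mul, intervalIntegral.integral_const_mul, I2, I32, I52]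
    rw [hβc]
    field_simp
    ring
end

section
/- Let β ∈ (0,1). Define l_1(α) = j_1(α)(cos α - sin α) with j_1(α) = β/((sqrt((1-β)sin α) + sqrt(cos α))²), and l_3(α) = j_3(α)(cos α - sin α) with j_3(α) = 2β(2-β)/(((2-β)sqrt(sin α) + 2sqrt((1-β)cos α))² + β² cos α), for α ∈ [0, π/2]. Let f_1(u) = (1/β)(1 - sqrt((1-β)/(1-u))) and a_3(u) = (1/β)(1 - (2+u)sqrt((1-β)/(4-u²))). Then f_1(l_1(α)) = a_3(l_3(α)) for all α ∈ (0, π/2). -/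
open Real

theorem stmt16 (β : ℝ) (hβ : β ∈ Set.Ioo (0:ℝ) 1) (α : ℝ)
    (hα : α ∈ Set.Ioo (0:ℝ) (Real.pi/2)) :
    let j1 : ℝ := β / (Real.sqrt ((1-β) * Real.sin α) + Real.sqrt (Real.cos α))^2
    let j3 : ℝ := 2*β*(2-β) /
      (((2-β) * Real.sqrt (Real.sin α) + 2 * Real.sqrt ((1-β) * Real.cos α))^2
        + β^2 * Real.cos α)
    let l1 : ℝ := j1 * (Real.cos α - Real.sin α)
    let l3 : ℝ := j3 * (Real.cos α - Real.sin α)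
    (1/β) * (1 - Real.sqrt ((1-β)/(1-l1)))
      = (1/β) * (1 - (2+l3) * Real.sqrt ((1-β)/(4-l3^2))) := by
  obtain ⟨hb0, hb1⟩ := hβ
  obtain ⟨ha0, ha1⟩ := hα
  intro j1 j3 l1 l3
  have hpi := Real.pi_pos
  have hs : 0 < Real.sin α := Real.sin_pos_of_pos_of_lt_pi ha0 (by linarith)
  have hc : 0 < Real.cos α := Real.cos_pos_of_mem_Ioo ⟨by linarith, ha1⟩
  have h1b : (0:ℝ) < 1 - β := by linarith
  set s := Real.sin α with hsdef
  set c := Real.cos α with hcdef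
  set x := Real.sqrt s with hxdef
  set y := Real.sqrt c with hydef
  set r := Real.sqrt (1-β) with hrdef
  have hx0 : 0 < x := Real.sqrt_pos.mpr hs
  have hy0 : 0 < y := Real.sqrt_pos.mpr hc
  have hr0 : 0 < r := Real.sqrt_pos.mpr h1b
  have hxs : x^2 = s := Real.sq_sqrt hs.le
  have hyc : y^2 = c := Real.sq_sqrt hc.le
  have hrb : r^2 = 1-β := Real.sq_sqrt h1b.le
  have h1 : Real.sqrt ((1-β)*s) = r*x := by rw [hxdef, hrdef, Real.sqrt_mul h1b.le]
  have h2 : Real.sqrt ((1-β)*c) = r*y := by rw [hydef, hrdef, Real.sqrt_mul h1b.le]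
  set A := r*x + y with hAdef
  set B := x + r*y with hBdef
  have hA0 : 0 < A := by positivity
  have hB0 : 0 < B := by positivity
  have hβ' : β = 1 - r^2 := by linarith [hrb]
  have hAB : A^2 - B^2 = β*(c-s) := by
    simp only [hAdef, hBdef, hβ', ← hxs, ← hyc]; ring
  have hl1 : l1 = β*(c-s)/A^2 := by
    show β / (Real.sqrt ((1-β)*s) + Real.sqrt c)^2 * (c - s) = _
    rw [h1, ← hydef, ← hAdef]; ring
  have h1l1 : 1 - l1 = B^2/A^2 := by
    rw [hl1]
    field_simp
    simp only [hβ', ← hxs, ← hyc]; ring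
  have hLsqrt : Real.sqrt ((1-β)/(1-l1)) = r*A/B := by
    have : (1-β)/(1-l1) = (r*A/B)^2 := by
      rw [h1l1]
      field_simp
      simp only [hAdef, hBdef, hβ', ← hxs, ← hyc]; ring
    rw [this, Real.sqrt_sq (by positivity)]
  have hD : ((2-β)*x + 2*(r*y))^2 + β^2*c = (2-β)*(A^2+B^2) := by
    simp only [hAdef, hBdef, hβ', ← hxs, ← hyc]; ring
  have h2b : (0:ℝ) < 2 - β := by linarith
  have hl3 : l3 = 2*β*(c-s)/(A^2+B^2) := by
    show 2*β*(2-β) / (((2-β)*Real.sqrt s + 2*Real.sqrt ((1-β)*c))^2 + β^2*c) * (c-s) = _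
    rw [h2, ← hxdef, hD, div_mul_eq_mul_div,
        div_eq_div_iff (by positivity) (by positivity)]
    ring
  have hABpos : 0 < A^2 + B^2 := by positivity
  have h2pl3 : 2 + l3 = 4*A^2/(A^2+B^2) := by
    rw [hl3]; field_simp
    simp only [hAdef, hBdef, hβ', ← hxs, ← hyc]; ring
  have h4l3 : 4 - l3^2 = 16*A^2*B^2/(A^2+B^2)^2 := by
    rw [hl3]; field_simp
    simp only [hAdef, hBdef, hβ', ← hxs, ← hyc]; ring
  have hRsqrt : Real.sqrt ((1-β)/(4-l3^2)) = r*(A^2+B^2)/(4*A*B) := by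
    have : (1-β)/(4-l3^2) = (r*(A^2+B^2)/(4*A*B))^2 := by
      rw [h4l3]
      field_simp
      simp only [hAdef, hBdef, hβ', ← hxs, ← hyc]; ring
    rw [this, Real.sqrt_sq (by positivity)]
  rw [hLsqrt, hRsqrt, h2pl3]
  field_simp
end

section
/- Let (U_j, ..., U_{j+k+1}) be real numbers with a unique minimum attained at index r, j ≤ r ≤ j+k+1. Define Ũ_{j+k+1} = min{U_j, ..., U_{j+k+1}}, Ũ_i = U_{i+1} for r ≤ i ≤ j+k, and Ũ_j = max{U_j, U_{j+1}}, Ũ_{j+1} = max{min{U_j, U_{j+1}}, U_{j+2}}, ..., Ũ_i = max{min{...min{U_j,U_{j+1}},...}, U_{i+1}} for j ≤ i ≤ r-1 (with all other entries Ũ_i = U_i for i ∉ {j,...,j+k+1}). Define the sorting operators σ_n acting on sequences by σ_n Y = (swap entries n, n+1 of Y) if Y_n < Y_{n+1}, else Y. Then Ũ = σ_{j+k} σ_{j+k-1} ⋯ σ_j U. -/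
/-- TASEP sorting operator: swap entries at positions `n` and `n+1`
if the left one is strictly smaller. -/
noncomputable def sortOp (n : ℤ) (Y : ℤ → ℝ) : ℤ → ℝ := fun i =>
  if Y n < Y (n+1) then
    (if i = n then Y (n+1) else if i = n+1 then Y n else Y i)
  else Y i

/-- State after `m` bubble steps. -/
noncomputable def Wst (U : ℤ → ℝ) (j : ℤ) (m : ℕ) : ℤ → ℝ := fun i =>
  if j ≤ i ∧ i < j + (m : ℤ) then max (sInf (U '' Set.Icc j i)) (U (i+1))
  else if i = j + (m : ℤ) then sInf (U '' Set.Icc j (j + (m : ℤ)))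
  else U i

lemma Wst_zero (U : ℤ → ℝ) (j : ℤ) : Wst U j 0 = U := by
  funext i
  simp only [Wst, Nat.cast_zero, add_zero]
  rw [if_neg (by omega)]
  split_ifs with h
  · subst h; rw [Set.Icc_self, Set.image_singleton, csInf_singleton]
  · rfl

lemma inf_succ (U : ℤ → ℝ) (j n : ℤ) (h : j ≤ n) :
    sInf (U '' Set.Icc j (n+1)) = min (sInf (U '' Set.Icc j n)) (U (n+1)) := by
  have hIcc : Set.Icc j (n+1) = insert (n+1) (Set.Icc j n) := by
    ext x; simp only [Set.mem_Icc, Set.mem_insert_iff]; omega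
  rw [hIcc, Set.image_insert_eq,
    csInf_insert ((Set.finite_Icc j n).image U).bddBelow
      ((Set.nonempty_Icc.mpr h).image U)]
  exact min_comm _ _

lemma Wst_step (U : ℤ → ℝ) (j : ℤ) (m : ℕ) :
    sortOp (j + (m : ℤ)) (Wst U j m) = Wst U j (m+1) := by
  have e1 : Wst U j m (j + (m:ℤ)) = sInf (U '' Set.Icc j (j + (m:ℤ))) := by
    simp only [Wst]; rw [if_neg (by omega)]; simp
  have e2 : Wst U j m (j + (m:ℤ) + 1) = U (j + (m:ℤ) + 1) := by
    simp only [Wst]; rw [if_neg (by omega), if_neg (by omega)]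
  have hm0 : (0:ℤ) ≤ (m:ℤ) := Int.ofNat_nonneg m
  have hsplit : sInf (U '' Set.Icc j (j + (m:ℤ) + 1))
      = min (sInf (U '' Set.Icc j (j + (m:ℤ)))) (U (j + (m:ℤ) + 1)) :=
    inf_succ U j _ (by omega)
  funext i
  simp only [sortOp, e1, e2]
  by_cases hlt : sInf (U '' Set.Icc j (j + (m:ℤ))) < U (j + (m:ℤ) + 1)
  · rw [if_pos hlt]
    by_cases h1 : i = j + (m:ℤ)
    · subst h1
      rw [if_pos rfl]
      simp only [Wst, Nat.cast_add, Nat.cast_one, ← add_assoc]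
      rw [if_pos (by omega)]
      exact (max_eq_right hlt.le).symm
    · rw [if_neg h1]
      by_cases h2 : i = j + (m:ℤ) + 1
      · subst h2
        rw [if_pos rfl]
        simp only [Wst, Nat.cast_add, Nat.cast_one, ← add_assoc]
        rw [if_neg (by omega), if_pos (by trivial), hsplit]
        exact (min_eq_left hlt.le).symm
      · rw [if_neg h2]
        simp only [Wst, Nat.cast_add, Nat.cast_one, ← add_assoc]
        split_ifs <;> first | rfl | omega
  · rw [if_neg hlt]
    have hge : U (j + (m:ℤ) + 1) ≤ sInf (U '' Set.Icc j (j + (m:ℤ))) := not_lt.mp hlt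
    by_cases h1 : i = j + (m:ℤ)
    · subst h1
      rw [e1]
      simp only [Wst, Nat.cast_add, Nat.cast_one, ← add_assoc]
      rw [if_pos (by omega)]
      exact (max_eq_left hge).symm
    · by_cases h2 : i = j + (m:ℤ) + 1
      · subst h2
        rw [e2]
        simp only [Wst, Nat.cast_add, Nat.cast_one, ← add_assoc]
        rw [if_neg (by omega), if_pos (by trivial), hsplit]
        exact (min_eq_right hge).symm
      · simp only [Wst, Nat.cast_add, Nat.cast_one, ← add_assoc]
        split_ifs <;> first | rfl | omega

lemma Wst_foldl' (U : ℤ → ℝ) (j : ℤ) (m : ℕ) :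
    (List.range m).foldl (fun Y (n : ℕ) => sortOp (j + (n : ℤ)) Y) U = Wst U j m := by
  induction m with
  | zero => simp [Wst_zero]
  | succ m ih =>
      rw [List.range_succ, List.foldl_append, ih, List.foldl_cons, List.foldl_nil]
      exact Wst_step U j m

lemma Wst_foldl (U : ℤ → ℝ) (j : ℤ) (m : ℕ) :
    (List.range m).foldl (fun Y n => sortOp (j + (n : ℤ)) Y) U = Wst U j m := by
  have h : (List.range m).foldl (fun Y n => sortOp (j + (n : ℤ)) Y) U
      = (List.range m).foldl (fun Y (n : ℕ) => sortOp (j + (n : ℤ)) Y) U := by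
    simp only [List.bind_eq_flatMap, List.pure_def, ← List.map_eq_flatMap, List.foldl_map]
  rw [h, Wst_foldl']

theorem stmt17 (U : ℤ → ℝ) (j r : ℤ) (k : ℕ)
    (hr : r ∈ Set.Icc j (j + (k : ℤ) + 1))
    (hmin : ∀ i ∈ Set.Icc j (j + (k : ℤ) + 1), i ≠ r → U r < U i) :
    (List.range (k + 1)).foldl (fun Y m => sortOp (j + (m : ℤ)) Y) U
      = fun i =>
        if i = j + (k : ℤ) + 1 then sInf (U '' Set.Icc j (j + (k : ℤ) + 1))
        else if r ≤ i ∧ i ≤ j + (k : ℤ) then U (i + 1)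
        else if j ≤ i ∧ i < r then max (sInf (U '' Set.Icc j i)) (U (i + 1))
        else U i := by
  rw [Set.mem_Icc] at hr
  rw [Wst_foldl U j (k+1)]
  funext i
  simp only [Wst, Nat.cast_add, Nat.cast_one, ← add_assoc]
  split_ifs
  all_goals try rfl
  all_goals try omega
  rename_i hC1 hD1 hD2
  have hmem : U r ∈ U '' Set.Icc j i := ⟨r, by simp only [Set.mem_Icc]; omega, rfl⟩
  have h3 : sInf (U '' Set.Icc j i) ≤ U r :=
    csInf_le ((Set.finite_Icc j i).image U).bddBelow hmem
  have h4 : U r < U (i+1) :=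
    hmin (i+1) (by simp only [Set.mem_Icc]; omega) (by omega)
  exact max_eq_right (le_of_lt (lt_of_le_of_lt h3 h4))
end
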